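/- The vector fields on the half-plane O = {(x,p) ∈ ℝ² : p < 0} given by X₁ = (1/√(-p)) ∂ₓ, X₂ = ∂ₓ, X₃ = x ∂ₓ - p ∂ₚ, X₄ = x² ∂ₓ - 2xp ∂ₚ, X₅ = (x/√(-p)) ∂ₓ + 2√(-p) ∂ₚ satisfy the commutation relations [X₁,X₃] = ½X₁, [X₁,X₄] = X₅, [X₂,X₃] = X₂, [X₂,X₄] = 2X₃, [X₂,X₅] = X₁, [X₃,X₄] = X₄, [X₃,X₅] = ½X₅, while [X₁,X₂] = [X₁,X₅] = [X₄,X₅] = 0. -/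

import Mathlib

open Real

/-- The half-plane `O = {(x,p) : p < 0}`. -/
def O : Set (ℝ × ℝ) := {z | z.2 < 0}

/-- Lie bracket of vector fields on `ℝ²`: `[V,W] = DW·V - DV·W`. -/
noncomputable def bracket (V W : ℝ × ℝ → ℝ × ℝ) (z : ℝ × ℝ) : ℝ × ℝ :=
  fderiv ℝ W z (V z) - fderiv ℝ V z (W z)

noncomputable def X₁ : ℝ × ℝ → ℝ × ℝ := fun z => (1 / Real.sqrt (-z.2), 0)
def X₂ : ℝ × ℝ → ℝ × ℝ := fun _ => (1, 0)
def X₃ : ℝ × ℝ → ℝ × ℝ := fun z => (z.1, -z.2)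
def X₄ : ℝ × ℝ → ℝ × ℝ := fun z => (z.1 ^ 2, -2 * z.1 * z.2)
noncomputable def X₅ : ℝ × ℝ → ℝ × ℝ :=
  fun z => (z.1 / Real.sqrt (-z.2), 2 * Real.sqrt (-z.2))

noncomputable def XF : Fin 5 → (ℝ × ℝ → ℝ × ℝ) := ![X₁, X₂, X₃, X₄, X₅]

noncomputable abbrev Fc : ℝ × ℝ →L[ℝ] ℝ := ContinuousLinearMap.fst ℝ ℝ ℝ
noncomputable abbrev Sc : ℝ × ℝ →L[ℝ] ℝ := ContinuousLinearMap.snd ℝ ℝ ℝ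

lemma hsqrtD {z : ℝ × ℝ} (hz : z.2 < 0) :
    HasFDerivAt (fun w : ℝ × ℝ => Real.sqrt (-w.2))
      ((1 / (2 * Real.sqrt (-z.2))) • (-Sc)) z := by
  have hne : (-z.2) ≠ 0 := (neg_pos.2 hz).ne'
  have h1 : HasFDerivAt (fun w : ℝ × ℝ => -w.2) (-Sc) z := hasFDerivAt_snd.neg
  exact h1.sqrt hne

lemma hinvD {z : ℝ × ℝ} (hz : z.2 < 0) :
    HasFDerivAt (fun w : ℝ × ℝ => (Real.sqrt (-w.2))⁻¹)
      ((1 / (2 * (Real.sqrt (-z.2))^3)) • Sc) z := by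
  have hs : 0 < Real.sqrt (-z.2) := Real.sqrt_pos.2 (by linarith)
  have h := (hasDerivAt_inv hs.ne').comp_hasFDerivAt z (hsqrtD hz)
  refine h.congr_fderiv ?_
  ext <;>
  simp [smul_smul, Function.comp]
  field_simp

lemma hX1 {z : ℝ × ℝ} (hz : z.2 < 0) :
    HasFDerivAt X₁ (((1 / (2 * (Real.sqrt (-z.2))^3)) • Sc).prod 0) z := by
  have h1 : HasFDerivAt (fun w : ℝ × ℝ => 1 / Real.sqrt (-w.2))
      ((1 / (2 * (Real.sqrt (-z.2))^3)) • Sc) z := by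
    simpa [one_div] using hinvD hz
  exact h1.prodMk (hasFDerivAt_const 0 z)

lemma hX2 (z : ℝ × ℝ) : HasFDerivAt X₂ (0 : ℝ × ℝ →L[ℝ] ℝ × ℝ) z :=
  hasFDerivAt_const ((1 : ℝ), (0 : ℝ)) z

lemma hX3 (z : ℝ × ℝ) : HasFDerivAt X₃ (Fc.prod (-Sc)) z :=
  hasFDerivAt_fst.prodMk hasFDerivAt_snd.neg

lemma hX4 (z : ℝ × ℝ) :
    HasFDerivAt X₄ ((z.1 • Fc + z.1 • Fc).prod
      ((-2 * z.1) • Sc + z.2 • (-2 : ℝ) • Fc)) z := by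
  have h1 : HasFDerivAt (fun w : ℝ × ℝ => w.1 ^ 2) (z.1 • Fc + z.1 • Fc) z := by
    have h := (hasFDerivAt_fst (𝕜 := ℝ) (p := z)).mul hasFDerivAt_fst
    simp only [pow_two]
    exact h
  have h2 : HasFDerivAt (fun w : ℝ × ℝ => -2 * w.1 * w.2)
      ((-2 * z.1) • Sc + z.2 • (-2 : ℝ) • Fc) z :=
    ((hasFDerivAt_fst (𝕜 := ℝ) (p := z)).const_mul (-2)).mul hasFDerivAt_snd
  exact h1.prodMk h2

lemma hX5 {z : ℝ × ℝ} (hz : z.2 < 0) :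
    HasFDerivAt X₅
      ((z.1 • ((1 / (2 * (Real.sqrt (-z.2))^3)) • Sc) + (Real.sqrt (-z.2))⁻¹ • Fc).prod
        ((2 : ℝ) • (1 / (2 * Real.sqrt (-z.2))) • (-Sc))) z := by
  have h1 : HasFDerivAt (fun w : ℝ × ℝ => w.1 / Real.sqrt (-w.2))
      (z.1 • ((1 / (2 * (Real.sqrt (-z.2))^3)) • Sc) + (Real.sqrt (-z.2))⁻¹ • Fc) z := by
    simp only [div_eq_mul_inv]
    exact (hasFDerivAt_fst (𝕜 := ℝ) (p := z)).mul (hinvD hz)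
  exact h1.prodMk ((hsqrtD hz).const_mul 2)


set_option maxHeartbeats 1000000 in
/-- the commutation relations of `X₁,…,X₅` on `O = {p < 0}`. -/
theorem commutation_relations : ∀ z ∈ O,
    bracket X₁ X₃ z = (1/2 : ℝ) • X₁ z ∧
    bracket X₁ X₄ z = X₅ z ∧
    bracket X₂ X₃ z = X₂ z ∧
    bracket X₂ X₄ z = (2 : ℝ) • X₃ z ∧
    bracket X₂ X₅ z = X₁ z ∧
    bracket X₃ X₄ z = X₄ z ∧
    bracket X₃ X₅ z = (1/2 : ℝ) • X₅ z ∧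
    bracket X₁ X₂ z = 0 ∧
    bracket X₁ X₅ z = 0 ∧
    bracket X₄ X₅ z = 0 := by
  intro z hz
  have hz : z.2 < 0 := hz
  have hs : 0 < Real.sqrt (-z.2) := Real.sqrt_pos.2 (by linarith)
  have hs2 : Real.sqrt (-z.2) * Real.sqrt (-z.2) = -z.2 :=
    Real.mul_self_sqrt (by linarith)
  have e1 := (hX1 hz).fderiv
  have e2 := (hX2 z).fderiv
  have e3 := (hX3 z).fderiv
  have e4 := (hX4 z).fderiv
  have e5 := (hX5 hz).fderiv
  refine ⟨?_, ?_, ?_, ?_, ?_, ?_, ?_, ?_, ?_, ?_⟩ <;>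
    simp only [bracket, e1, e2, e3, e4, e5, X₁, X₂, X₃, X₄, X₅] <;>
    simp [Prod.ext_iff, smul_eq_mul] <;>
    · generalize hsq : Real.sqrt (-z.2) = s at hs hs2 ⊢
      try rw [show z.2 = -(s*s) from by linarith]
      first
        | exact ⟨trivial, trivial⟩
        | (refine ⟨?_, ?_⟩ <;> first | ring1 | (field_simp [hs.ne']; try ring1))
        | ring1
        | (field_simp [hs.ne']; try ring1)
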